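/- Let 𝒞 be a finite set of constructive formulas and let G = CK+𝒞 be either T-free or T-full. Then G has the Visser–Harrop property: whenever G proves Γ, {A_i → B_i}_{i∈I} ⇒ C ∨ D, where Γ is a finite multiset of Harrop formulas and I is a finite (possibly empty) index set, then G proves Γ, {A_i → B_i}_{i∈I} ⇒ C, or Γ, {A_i → B_i}_{i∈I} ⇒ D, or Γ, {A_i → B_i}_{i∈I} ⇒ A_i for some i ∈ I. -/

import Mathlib

set_option autoImplicit false

namespace UPT

/-- Modal formulas over atoms of type `α` (the language `ℒ = {∧,∨,→,⊤,⊥,□,◇}`). -/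
inductive Fml (α : Type) : Type where
  | atom : α → Fml α
  | top  : Fml α
  | bot  : Fml α
  | and  : Fml α → Fml α → Fml α
  | or   : Fml α → Fml α → Fml α
  | imp  : Fml α → Fml α → Fml α
  | box  : Fml α → Fml α
  | dia  : Fml α → Fml α
deriving DecidableEq

variable {α β : Type}

/-- Simultaneous substitution of formulas for atoms. -/
def Fml.subst (σ : β → Fml α) : Fml β → Fml α
  | .atom b  => σ b
  | .top     => .top
  | .bot     => .bot
  | .and A B => .and (A.subst σ) (B.subst σ)
  | .or A B  => .or (A.subst σ) (B.subst σ)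
  | .imp A B => .imp (A.subst σ) (B.subst σ)
  | .box A   => .box (A.subst σ)
  | .dia A   => .dia (A.subst σ)

/-- A sequent: a finite multiset antecedent together with a succedent
containing at most one formula. -/
abbrev Seq (α : Type) : Type := Multiset (Fml α) × Option (Fml α)

/-- A rule set relates a (finite) list of premise sequents to a conclusion sequent. -/
abbrev RuleSet (α : Type) : Type := List (Seq α) → Seq α → Prop

/-- The axioms and rules of the single-conclusion sequent calculus `LJ`, stated
schematically: they are closed under substituting arbitrary formulas for atoms
and arbitrary multisets (resp. succedents) for the context variables. -/
inductive LJRule : List (Seq α) → Seq α → Prop where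
  | id (Γ : Multiset (Fml α)) (A : Fml α) : LJRule [] (A ::ₘ Γ, some A)
  | botL (Γ : Multiset (Fml α)) (Δ : Option (Fml α)) : LJRule [] (.bot ::ₘ Γ, Δ)
  | topR (Γ : Multiset (Fml α)) : LJRule [] (Γ, some .top)
  | wL (A : Fml α) (Γ : Multiset (Fml α)) (Δ : Option (Fml α)) :
      LJRule [(Γ, Δ)] (A ::ₘ Γ, Δ)
  | wR (A : Fml α) (Γ : Multiset (Fml α)) : LJRule [(Γ, none)] (Γ, some A)
  | cL (A : Fml α) (Γ : Multiset (Fml α)) (Δ : Option (Fml α)) :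
      LJRule [(A ::ₘ A ::ₘ Γ, Δ)] (A ::ₘ Γ, Δ)
  | cut (A : Fml α) (Γ : Multiset (Fml α)) (Δ : Option (Fml α)) :
      LJRule [(Γ, some A), (A ::ₘ Γ, Δ)] (Γ, Δ)
  | andL₁ (A B : Fml α) (Γ : Multiset (Fml α)) (Δ : Option (Fml α)) :
      LJRule [(A ::ₘ Γ, Δ)] (.and A B ::ₘ Γ, Δ)
  | andL₂ (A B : Fml α) (Γ : Multiset (Fml α)) (Δ : Option (Fml α)) :
      LJRule [(B ::ₘ Γ, Δ)] (.and A B ::ₘ Γ, Δ)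
  | andR (A B : Fml α) (Γ : Multiset (Fml α)) :
      LJRule [(Γ, some A), (Γ, some B)] (Γ, some (.and A B))
  | orL (A B : Fml α) (Γ : Multiset (Fml α)) (Δ : Option (Fml α)) :
      LJRule [(A ::ₘ Γ, Δ), (B ::ₘ Γ, Δ)] (.or A B ::ₘ Γ, Δ)
  | orR₁ (A B : Fml α) (Γ : Multiset (Fml α)) : LJRule [(Γ, some A)] (Γ, some (.or A B))
  | orR₂ (A B : Fml α) (Γ : Multiset (Fml α)) : LJRule [(Γ, some B)] (Γ, some (.or A B))
  | impL (A B : Fml α) (Γ : Multiset (Fml α)) (Δ : Option (Fml α)) :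
      LJRule [(Γ, some A), (B ::ₘ Γ, Δ)] (.imp A B ::ₘ Γ, Δ)
  | impR (A B : Fml α) (Γ : Multiset (Fml α)) :
      LJRule [(A ::ₘ Γ, some B)] (Γ, some (.imp A B))

/-- The rule `K_□`: from `Γ ⇒ A` infer `□Γ ⇒ □A`. -/
inductive KBoxRule : List (Seq α) → Seq α → Prop where
  | mk (Γ : Multiset (Fml α)) (A : Fml α) :
      KBoxRule [(Γ, some A)] (Γ.map Fml.box, some (.box A))

/-- The rule `K_◇`: from `Γ, A ⇒ B` infer `□Γ, ◇A ⇒ ◇B`. -/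
inductive KDiaRule : List (Seq α) → Seq α → Prop where
  | mk (Γ : Multiset (Fml α)) (A B : Fml α) :
      KDiaRule [(A ::ₘ Γ, some B)] (.dia A ::ₘ Γ.map Fml.box, some (.dia B))

/-- The rule `◇L`: from `Γ, A ⇒ B` infer `Γ, ◇A ⇒ ◇B`. -/
inductive DiaLRule : List (Seq α) → Seq α → Prop where
  | mk (Γ : Multiset (Fml α)) (A B : Fml α) :
      DiaLRule [(A ::ₘ Γ, some B)] (.dia A ::ₘ Γ, some (.dia B))

/-- Adding a set `Ax` of axioms to a calculus: the initial sequents `⇒ σ(A)`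
for every substitution instance `σ(A)` of every `A ∈ Ax`. -/
def axRule (Ax : Fml α → Prop) : RuleSet α := fun ps c =>
  ps = [] ∧ ∃ (A : Fml α) (σ : α → Fml α), Ax A ∧ c = ((0 : Multiset (Fml α)), some (A.subst σ))

/-- Using a set of sequents as additional initial sequents (assumptions). -/
def hypRule (H : Set (Seq α)) : RuleSet α := fun ps c => ps = [] ∧ c ∈ H

/-- The sequent calculus `LJ+Ax`. -/
def LJSys (Ax : Fml α → Prop) : RuleSet α := fun ps c => LJRule ps c ∨ axRule Ax ps c

/-- The sequent calculus `CK+Ax = LJ + K_□ + K_◇ + Ax`. -/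
def CKSys (Ax : Fml α → Prop) : RuleSet α := fun ps c =>
  LJRule ps c ∨ KBoxRule ps c ∨ KDiaRule ps c ∨ axRule Ax ps c

/-- The sequent calculus `CK_□+Ax = LJ + K_□ + Ax`. -/
def CKBoxSys (Ax : Fml α → Prop) : RuleSet α := fun ps c =>
  LJRule ps c ∨ KBoxRule ps c ∨ axRule Ax ps c

/-- The sequent calculus `BLL+Ax = LJ + ◇L + Ax`. -/
def BLLSys (Ax : Fml α → Prop) : RuleSet α := fun ps c =>
  LJRule ps c ∨ DiaLRule ps c ∨ axRule Ax ps c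

/-- Provability of a sequent in the calculus generated by a rule set. -/
inductive Derives (R : RuleSet α) : Multiset (Fml α) → Option (Fml α) → Prop where
  | step {ps : List (Seq α)} {c : Seq α} (hr : R ps c)
      (hp : ∀ p ∈ ps, Derives R p.1 p.2) : Derives R c.1 c.2

/-- Basic formulas: generated from atoms, `⊤`, `⊥` by `∧`, `∨`, `◇`. -/
inductive Basic : Fml α → Prop where
  | atom (a : α) : Basic (.atom a)
  | top : Basic (.top : Fml α)
  | bot : Basic (.bot : Fml α)
  | and {A B : Fml α} : Basic A → Basic B → Basic (.and A B)
  | or {A B : Fml α} : Basic A → Basic B → Basic (.or A B)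
  | dia {A : Fml α} : Basic A → Basic (.dia A)

/-- Almost positive formulas: generated from basic formulas by `∧`, `∨`, `□`, `◇`
and implications `A → B` with `A` basic and `B` almost positive. -/
inductive AlmostPos : Fml α → Prop where
  | basic {A : Fml α} : Basic A → AlmostPos A
  | and {A B : Fml α} : AlmostPos A → AlmostPos B → AlmostPos (.and A B)
  | or {A B : Fml α} : AlmostPos A → AlmostPos B → AlmostPos (.or A B)
  | box {A : Fml α} : AlmostPos A → AlmostPos (.box A)
  | dia {A : Fml α} : AlmostPos A → AlmostPos (.dia A)
  | imp {A B : Fml α} : Basic A → AlmostPos B → AlmostPos (.imp A B)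

/-- Constructive formulas: generated from basic formulas by `∧`, `□` and
implications `A → B` with `A` almost positive and `B` constructive. -/
inductive Constructive : Fml α → Prop where
  | basic {A : Fml α} : Basic A → Constructive A
  | and {A B : Fml α} : Constructive A → Constructive B → Constructive (.and A B)
  | box {A : Fml α} : Constructive A → Constructive (.box A)
  | imp {A B : Fml α} : AlmostPos A → Constructive B → Constructive (.imp A B)

/-- Harrop formulas: atoms, `⊥`, `⊤`, closed under `∧`, `□`, and implications
`A → B` with `A` arbitrary and `B` Harrop. -/
inductive Harrop : Fml α → Prop where
  | atom (a : α) : Harrop (.atom a)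
  | top : Harrop (.top : Fml α)
  | bot : Harrop (.bot : Fml α)
  | and {A B : Fml α} : Harrop A → Harrop B → Harrop (.and A B)
  | box {A : Fml α} : Harrop A → Harrop (.box A)
  | imp (A : Fml α) {B : Fml α} : Harrop B → Harrop (.imp A B)

/-- Conjunction of a list of formulas (`⋀∅ = ⊤`). -/
def conj : List (Fml α) → Fml α
  | [] => .top
  | [A] => A
  | A :: B :: l => .and A (conj (B :: l))

/-- Disjunction of a list of formulas (`⋁∅ = ⊥`). -/
def disj : List (Fml α) → Fml α
  | [] => .bot
  | [A] => A
  | A :: B :: l => .or A (disj (B :: l))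

/-- Disjunction of a succedent (at most one formula; `⋁∅ = ⊥`). -/
def odisj : Option (Fml α) → Fml α
  | none => .bot
  | some A => A

/-- The multiset `{A_i → B_i}_{i ∈ I}` of implications of an indexed family. -/
def imps (AB : List (Fml α × Fml α)) : Multiset (Fml α) :=
  ↑(AB.map fun p => Fml.imp p.1 p.2)

/-- The conjunction `⋀_{i∈I} (A_i → B_i)` of an indexed family of implications. -/
def impConj (AB : List (Fml α × Fml α)) : Fml α :=
  conj (AB.map fun p => Fml.imp p.1 p.2)

/-- Truth in the one-node *irreflexive* frame `𝒦ᵢ` under a Boolean valuation: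
`□A` is always true and `◇A` is always false; the propositional connectives
are evaluated classically. -/
def evalI (v : α → Bool) : Fml α → Bool
  | .atom a  => v a
  | .top     => true
  | .bot     => false
  | .and A B => evalI v A && evalI v B
  | .or A B  => evalI v A || evalI v B
  | .imp A B => !evalI v A || evalI v B
  | .box _   => true
  | .dia _   => false

/-- Truth in the one-node *reflexive* frame `𝒦ᵣ` under a Boolean valuation:
`□A` and `◇A` take the value of `A`. -/
def evalR (v : α → Bool) : Fml α → Bool
  | .atom a  => v a
  | .top     => true
  | .bot     => false
  | .and A B => evalR v A && evalR v B
  | .or A B  => evalR v A || evalR v B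
  | .imp A B => !evalR v A || evalR v B
  | .box A   => evalR v A
  | .dia A   => evalR v A

/-- Validity of a sequent with respect to a one-node semantics: under every
valuation, if all formulas of the antecedent are true then so is the succedent. -/
def SeqValid (ev : (α → Bool) → Fml α → Bool) (Γ : Multiset (Fml α)) (Δ : Option (Fml α)) :
    Prop :=
  ∀ v : α → Bool, (∀ A ∈ Γ, ev v A = true) → ∃ B ∈ Δ, ev v B = true

/-- `CK+Ax` is T-free: every provable sequent is valid in the irreflexive node frame. -/
def TFree (Ax : Fml α → Prop) : Prop :=
  ∀ (Γ : Multiset (Fml α)) (Δ : Option (Fml α)), Derives (CKSys Ax) Γ Δ → SeqValid evalI Γ Δ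

/-- `CK+Ax` is T-full: every provable sequent is valid in the reflexive node
frame and the calculus proves `⇒ □p → p` and `⇒ p → ◇p`. -/
def TFull (Ax : Fml α → Prop) : Prop :=
  (∀ (Γ : Multiset (Fml α)) (Δ : Option (Fml α)), Derives (CKSys Ax) Γ Δ → SeqValid evalR Γ Δ) ∧
  (∀ a : α, Derives (CKSys Ax) 0 (some (.imp (.box (.atom a)) (.atom a)))) ∧
  (∀ a : α, Derives (CKSys Ax) 0 (some (.imp (.atom a) (.dia (.atom a)))))

/-- Classical validity of a (modality-free) sequent: `⋀Γ → ⋁Δ` is true under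
every Boolean valuation of the atoms. -/
def ClValid (Γ : Multiset (Fml α)) (Δ : Option (Fml α)) : Prop :=
  ∀ v : α → Bool, (∀ A ∈ Γ, evalI v A = true) → ∃ B ∈ Δ, evalI v B = true

/-- Nonempty conjunctions of atoms. -/
inductive AtomConj : Fml α → Prop where
  | single (a : α) : AtomConj (.atom a)
  | and {A B : Fml α} : AtomConj A → AtomConj B → AtomConj (.and A B)

/-- Implicational Horn formulas: `⊥`, atoms, and implications `⋀Q → r` with `Q`
a nonempty multiset of atoms and `r` an atom or `⊥`. -/
inductive ImpHorn : Fml α → Prop where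
  | bot : ImpHorn (.bot : Fml α)
  | atom (a : α) : ImpHorn (.atom a)
  | impAtom {A : Fml α} (hA : AtomConj A) (a : α) : ImpHorn (.imp A (.atom a))
  | impBot {A : Fml α} (hA : AtomConj A) : ImpHorn (.imp A .bot)

/-- Formulas of the form `◇^n p` with `p` an atom and `n ≥ 0`. -/
inductive DiaPowAtom : Fml α → Prop where
  | atom (a : α) : DiaPowAtom (.atom a)
  | dia {A : Fml α} : DiaPowAtom A → DiaPowAtom (.dia A)

/-- Nonempty conjunctions `⋀_{i=1}^k ◇^{n_i} p_i` of formulas `◇^{n_i} p_i`. -/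
inductive DiaConj : Fml α → Prop where
  | single {A : Fml α} : DiaPowAtom A → DiaConj A
  | and {A B : Fml α} : DiaConj A → DiaConj B → DiaConj (.and A B)

/-- Modal Horn formulas: `⊥` and atoms, closed under `□` and under implications
`A → B` with `A = ⋀_{i=1}^k ◇^{n_i} p_i` and `B` modal Horn. -/
inductive ModalHorn : Fml α → Prop where
  | bot : ModalHorn (.bot : Fml α)
  | atom (a : α) : ModalHorn (.atom a)
  | box {A : Fml α} : ModalHorn A → ModalHorn (.box A)
  | imp {A B : Fml α} : DiaConj A → ModalHorn B → ModalHorn (.imp A B)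

/-- The predicate "all atoms of the formula satisfy `P`". -/
def Fml.AtomsIn (P : α → Prop) : Fml α → Prop
  | .atom a  => P a
  | .top     => True
  | .bot     => True
  | .and A B => A.AtomsIn P ∧ B.AtomsIn P
  | .or A B  => A.AtomsIn P ∧ B.AtomsIn P
  | .imp A B => A.AtomsIn P ∧ B.AtomsIn P
  | .box A   => A.AtomsIn P
  | .dia A   => A.AtomsIn P

/-- No `◇` occurs in the formula. -/
def Fml.DiaFree : Fml α → Prop
  | .atom _  => True
  | .top     => True
  | .bot     => True
  | .and A B => A.DiaFree ∧ B.DiaFree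
  | .or A B  => A.DiaFree ∧ B.DiaFree
  | .imp A B => A.DiaFree ∧ B.DiaFree
  | .box A   => A.DiaFree
  | .dia _   => False

/-- No `□` occurs in the formula. -/
def Fml.BoxFree : Fml α → Prop
  | .atom _  => True
  | .top     => True
  | .bot     => True
  | .and A B => A.BoxFree ∧ B.BoxFree
  | .or A B  => A.BoxFree ∧ B.BoxFree
  | .imp A B => A.BoxFree ∧ B.BoxFree
  | .box _   => False
  | .dia A   => A.BoxFree

/-- The formula is modality-free (propositional). -/
def Fml.ModFree : Fml α → Prop
  | .atom _  => True
  | .top     => True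
  | .bot     => True
  | .and A B => A.ModFree ∧ B.ModFree
  | .or A B  => A.ModFree ∧ B.ModFree
  | .imp A B => A.ModFree ∧ B.ModFree
  | .box _   => False
  | .dia _   => False

/-- An angling of the language: an injection `φ ↦ ⟨φ⟩` from formulas into the
atoms whose image (the angled atoms) is disjoint from a fixed infinite set of
plain atoms. -/
structure Angling (α : Type) where
  angle : Fml α → α
  plain : Set α
  inj : Function.Injective angle
  plain_infinite : plain.Infinite
  disjoint : ∀ φ : Fml α, angle φ ∉ plain

/-- `a` is an angled atom. -/
def Angling.Angled (S : Angling α) (a : α) : Prop := ∃ φ : Fml α, S.angle φ = a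

/-- The translation `t`: `⊥^t = ⊥`, `p^t = ⟨p⟩`, `⊤^t = ⟨⊤⟩`,
`(A ∘ B)^t = (A^t ∘ B^t) ∧ ⟨A ∘ B⟩` and `(○A)^t = (○A^t) ∧ ⟨○A⟩`. -/
def Angling.tr (S : Angling α) : Fml α → Fml α
  | .atom a  => .atom (S.angle (.atom a))
  | .top     => .atom (S.angle .top)
  | .bot     => .bot
  | .and A B => .and (.and (S.tr A) (S.tr B)) (.atom (S.angle (.and A B)))
  | .or A B  => .and (.or (S.tr A) (S.tr B)) (.atom (S.angle (.or A B)))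
  | .imp A B => .and (.imp (S.tr A) (S.tr B)) (.atom (S.angle (.imp A B)))
  | .box A   => .and (.box (S.tr A)) (.atom (S.angle (.box A)))
  | .dia A   => .and (.dia (S.tr A)) (.atom (S.angle (.dia A)))

/-- Action of the standard substitution on atoms: an angled atom `⟨φ⟩` is sent
to `φ`; plain atoms are fixed. -/
noncomputable def Angling.stdAtom (S : Angling α) (a : α) : Fml α :=
  haveI := Classical.propDecidable (∃ φ : Fml α, S.angle φ = a)
  if h : ∃ φ : Fml α, S.angle φ = a then h.choose else .atom a

/-- The standard substitution `s`: replaces each angled atom `⟨φ⟩` by `φ`,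
fixes the plain atoms, and commutes with all connectives. -/
noncomputable def Angling.std (S : Angling α) : Fml α → Fml α :=
  Fml.subst S.stdAtom

/-- The Visser–Harrop property of a calculus. -/
def VisserHarrop (R : RuleSet α) : Prop :=
  ∀ (Γ : Multiset (Fml α)), (∀ A ∈ Γ, Harrop A) →
  ∀ (AB : List (Fml α × Fml α)) (C D : Fml α),
    Derives R (Γ + imps AB) (some (.or C D)) →
    Derives R (Γ + imps AB) (some C) ∨
    Derives R (Γ + imps AB) (some D) ∨
    ∃ p ∈ AB, Derives R (Γ + imps AB) (some p.1)

/-- The disjunction property of a calculus. -/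
def DisjProp (R : RuleSet α) : Prop :=
  ∀ C D : Fml α, Derives R 0 (some (.or C D)) →
    Derives R 0 (some C) ∨ Derives R 0 (some D)

/-- The formula interpretation `I(Γ ⇒ Δ) = ⋀Γ → ⋁Δ` belongs to `L` (stated for
every enumeration of the antecedent multiset as a list). -/
def interpIn (L : Set (Fml α)) (s : Seq α) : Prop :=
  ∀ l : List (Fml α), (↑l : Multiset (Fml α)) = s.1 → Fml.imp (conj l) (odisj s.2) ∈ L

/- Named modal axioms (with `p := atom 0`, `q := atom 1`). -/
def axTa : Fml ℕ := .imp (.box (.atom 0)) (.atom 0)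
def axTb : Fml ℕ := .imp (.atom 0) (.dia (.atom 0))
def axBa : Fml ℕ := .imp (.dia (.box (.atom 0))) (.atom 0)
def axBb : Fml ℕ := .imp (.atom 0) (.box (.dia (.atom 0)))
def ax4a : Fml ℕ := .imp (.box (.atom 0)) (.box (.box (.atom 0)))
def ax4b : Fml ℕ := .imp (.dia (.dia (.atom 0))) (.dia (.atom 0))
def ax5a : Fml ℕ := .imp (.dia (.box (.atom 0))) (.box (.atom 0))
def ax5b : Fml ℕ := .imp (.dia (.atom 0)) (.box (.dia (.atom 0)))
def axDiaBot : Fml ℕ := .imp (.dia .bot) .bot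
def axDiaOr : Fml ℕ :=
  .imp (.dia (.or (.atom 0) (.atom 1))) (.or (.dia (.atom 0)) (.dia (.atom 1)))
def axBoxImp : Fml ℕ :=
  .imp (.imp (.dia (.atom 0)) (.box (.atom 1))) (.box (.imp (.atom 0) (.atom 1)))

/-- The axioms of `X ⊆ {T, B, 4, 5}` in both their `a`- and `b`-versions. -/
def XAxioms (tT tB t4 t5 : Bool) : Set (Fml ℕ) :=
  (if tT then ({axTa, axTb} : Set (Fml ℕ)) else ∅) ∪
  (if tB then ({axBa, axBb} : Set (Fml ℕ)) else ∅) ∪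
  (if t4 then ({ax4a, ax4b} : Set (Fml ℕ)) else ∅) ∪
  (if t5 then ({ax5a, ax5b} : Set (Fml ℕ)) else ∅)

/-- The additional axioms of `IK` over `CK`. -/
def IKExtra : Set (Fml ℕ) := {axDiaBot, axDiaOr, axBoxImp}

/-- The right rule with premises `{Γ, φ̄_i ⇒ ψ̄_i}_{i∈I}` and conclusion
`Γ, θ̄ ⇒ η̄`, closed under all substitutions of formulas for atoms and
multisets for the context `Γ`. -/
def rightRuleInst (prems : List (List (Fml α) × Option (Fml α)))
    (θ : List (Fml α)) (η : Option (Fml α)) : RuleSet α := fun ps c =>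
  ∃ (σ : α → Fml α) (Γ : Multiset (Fml α)),
    ps = prems.map (fun pr =>
        ((Γ + ↑(pr.1.map (Fml.subst σ)) : Multiset (Fml α)), pr.2.map (Fml.subst σ))) ∧
    c = ((Γ + ↑(θ.map (Fml.subst σ)) : Multiset (Fml α)), η.map (Fml.subst σ))

/-- The left rule with premises `{Γ, φ̄_i ⇒ ψ̄_i}_{i∈I} ∪ {Γ, θ̄_j ⇒ Δ}_{j∈J}`
and conclusion `Γ, η̄ ⇒ Δ`, closed under all substitutions of formulas for
atoms and multisets for `Γ` and `Δ`. -/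
def leftRuleInst (prems : List (List (Fml α) × Option (Fml α)))
    (lefts : List (List (Fml α))) (η : List (Fml α)) : RuleSet α := fun ps c =>
  ∃ (σ : α → Fml α) (Γ : Multiset (Fml α)) (Δ : Option (Fml α)),
    ps = prems.map (fun pr =>
          ((Γ + ↑(pr.1.map (Fml.subst σ)) : Multiset (Fml α)), pr.2.map (Fml.subst σ)))
        ++ lefts.map (fun θj => ((Γ + ↑(θj.map (Fml.subst σ)) : Multiset (Fml α)), Δ)) ∧
    c = ((Γ + ↑(η.map (Fml.subst σ)) : Multiset (Fml α)), Δ)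

/-- The formula `Ax_R` of a right rule. -/
def AxRight (prems : List (List (Fml α) × Option (Fml α)))
    (θ : List (Fml α)) (η : Option (Fml α)) : Fml α :=
  .imp (.and (conj (prems.map fun pr => .imp (conj pr.1) (odisj pr.2))) (conj θ)) (odisj η)

/-- The formula `Ax_R` of a left rule. -/
def AxLeft (prems : List (List (Fml α) × Option (Fml α)))
    (lefts : List (List (Fml α))) (η : List (Fml α)) : Fml α :=
  .imp (.and (conj (prems.map fun pr => .imp (conj pr.1) (odisj pr.2))) (conj η))
    (disj (lefts.map conj))

/-- The forgetful translation `f_i`: fixes atoms, `⊤`, `⊥`, commutes with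
`∧`, `∨`, `→`, `□`, and sends every `◇A` to `⊥`. -/
def fi : Fml α → Fml α
  | .atom a  => .atom a
  | .top     => .top
  | .bot     => .bot
  | .and A B => .and (fi A) (fi B)
  | .or A B  => .or (fi A) (fi B)
  | .imp A B => .imp (fi A) (fi B)
  | .box A   => .box (fi A)
  | .dia _   => .bot

/-- The forgetful translation `f_r`: fixes atoms, `⊤`, `⊥`, commutes with
`∧`, `∨`, `→`, `□`, and sends `◇A` to `f_r A`. -/
def fr : Fml α → Fml α
  | .atom a  => .atom a
  | .top     => .top
  | .bot     => .bot
  | .and A B => .and (fr A) (fr B)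
  | .or A B  => .or (fr A) (fr B)
  | .imp A B => .imp (fr A) (fr B)
  | .box A   => .box (fr A)
  | .dia A   => fr A


/-! ### Auxiliary development for the Visser–Harrop property -/

section VH

variable {Ax : Fml ℕ → Prop}

private lemma dstep {R : RuleSet ℕ} {ps : List (Seq ℕ)} {Γ : Multiset (Fml ℕ)}
    {E : Option (Fml ℕ)} (hr : R ps (Γ, E)) (hp : ∀ p ∈ ps, Derives R p.1 p.2) :
    Derives R Γ E :=
  Derives.step (c := (Γ, E)) hr hp

private lemma dnil {R : RuleSet ℕ} : ∀ p ∈ ([] : List (Seq ℕ)), Derives R p.1 p.2 := by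
  intro p hp; exact absurd hp List.not_mem_nil

private lemma done1 {R : RuleSet ℕ} {q : Seq ℕ} (h : Derives R q.1 q.2) :
    ∀ p ∈ [q], Derives R p.1 p.2 := by
  intro p hp; simp at hp; subst hp; exact h

private lemma done2 {R : RuleSet ℕ} {q r : Seq ℕ} (h1 : Derives R q.1 q.2)
    (h2 : Derives R r.1 r.2) : ∀ p ∈ [q, r], Derives R p.1 p.2 := by
  intro p hp; simp at hp; rcases hp with rfl | rfl; exacts [h1, h2]

/-- identity sequents -/
lemma did {Γ : Multiset (Fml ℕ)} {F : Fml ℕ} : Derives (CKSys Ax) (F ::ₘ Γ) (some F) :=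
  dstep (Or.inl (LJRule.id Γ F)) dnil

/-- weakening -/
lemma dweak {Γ : Multiset (Fml ℕ)} {E : Option (Fml ℕ)} (h : Derives (CKSys Ax) Γ E)
    (Sig : Multiset (Fml ℕ)) : Derives (CKSys Ax) (Sig + Γ) E := by
  induction Sig using Multiset.induction with
  | empty => simpa using h
  | cons A S ih =>
    rw [Multiset.cons_add]
    exact dstep (Or.inl (LJRule.wL A _ _)) (done1 ih)

lemma dweak0 {E : Option (Fml ℕ)} (h : Derives (CKSys Ax) 0 E) (Θ : Multiset (Fml ℕ)) :
    Derives (CKSys Ax) Θ E := by simpa using dweak h Θ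

/-- cut -/
lemma dcut {Θ : Multiset (Fml ℕ)} {A : Fml ℕ} {E : Option (Fml ℕ)}
    (h1 : Derives (CKSys Ax) Θ (some A)) (h2 : Derives (CKSys Ax) (A ::ₘ Θ) E) :
    Derives (CKSys Ax) Θ E :=
  dstep (Or.inl (LJRule.cut A Θ E)) (done2 h1 h2)

/-- multicut -/
lemma dmcut {Θ Δ : Multiset (Fml ℕ)} {E : Option (Fml ℕ)}
    (h : Derives (CKSys Ax) Δ E) (hm : ∀ F ∈ Δ, Derives (CKSys Ax) Θ (some F)) :
    Derives (CKSys Ax) Θ E := by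
  have key : ∀ (Δ' : Multiset (Fml ℕ)), Derives (CKSys Ax) (Δ' + Θ) E →
      (∀ F ∈ Δ', Derives (CKSys Ax) Θ (some F)) → Derives (CKSys Ax) Θ E := by
    intro Δ'
    induction Δ' using Multiset.induction with
    | empty => intro h _; simpa using h
    | cons A S ih =>
      intro h hm
      rw [Multiset.cons_add] at h
      have hA : Derives (CKSys Ax) (S + Θ) (some A) :=
        dweak (hm A (Multiset.mem_cons_self A S)) S
      exact ih (dcut hA h) (fun F hF => hm F (Multiset.mem_cons_of_mem hF))
  refine key Δ ?_ hm
  rw [add_comm]; exact dweak h Θ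

/-- modus ponens -/
lemma dmp {Θ : Multiset (Fml ℕ)} {A B : Fml ℕ}
    (h1 : Derives (CKSys Ax) Θ (some (.imp A B))) (h2 : Derives (CKSys Ax) Θ (some A)) :
    Derives (CKSys Ax) Θ (some B) := by
  refine dcut h1 ?_
  refine dstep (Or.inl (LJRule.impL A B Θ (some B))) (done2 ?_ ?_)
  · exact h2
  · exact did

lemma dand1 {Θ : Multiset (Fml ℕ)} {A B : Fml ℕ}
    (h : Derives (CKSys Ax) Θ (some (.and A B))) : Derives (CKSys Ax) Θ (some A) :=
  dcut h (dstep (Or.inl (LJRule.andL₁ A B Θ (some A))) (done1 did))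

lemma dand2 {Θ : Multiset (Fml ℕ)} {A B : Fml ℕ}
    (h : Derives (CKSys Ax) Θ (some (.and A B))) : Derives (CKSys Ax) Θ (some B) :=
  dcut h (dstep (Or.inl (LJRule.andL₂ A B Θ (some B))) (done1 did))

lemma dandR {Θ : Multiset (Fml ℕ)} {A B : Fml ℕ}
    (h1 : Derives (CKSys Ax) Θ (some A)) (h2 : Derives (CKSys Ax) Θ (some B)) :
    Derives (CKSys Ax) Θ (some (.and A B)) :=
  dstep (Or.inl (LJRule.andR A B Θ)) (done2 h1 h2)

lemma dorR1 {Θ : Multiset (Fml ℕ)} {A B : Fml ℕ} (h : Derives (CKSys Ax) Θ (some A)) :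
    Derives (CKSys Ax) Θ (some (.or A B)) :=
  dstep (Or.inl (LJRule.orR₁ A B Θ)) (done1 h)

lemma dorR2 {Θ : Multiset (Fml ℕ)} {A B : Fml ℕ} (h : Derives (CKSys Ax) Θ (some B)) :
    Derives (CKSys Ax) Θ (some (.or A B)) :=
  dstep (Or.inl (LJRule.orR₂ A B Θ)) (done1 h)

lemma dtop {Θ : Multiset (Fml ℕ)} : Derives (CKSys Ax) Θ (some .top) :=
  dstep (Or.inl (LJRule.topR Θ)) dnil

lemma dbotC {Θ : Multiset (Fml ℕ)} {E : Option (Fml ℕ)}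
    (h : Derives (CKSys Ax) Θ (some .bot)) : Derives (CKSys Ax) Θ E :=
  dcut h (dstep (Or.inl (LJRule.botL Θ E)) dnil)

lemma dmem {Θ : Multiset (Fml ℕ)} {F : Fml ℕ} (h : F ∈ Θ) :
    Derives (CKSys Ax) Θ (some F) := by
  obtain ⟨Θ', rfl⟩ := Multiset.exists_cons_of_mem h
  exact did

end VH


section VH2

variable {Ax : Fml ℕ → Prop}

lemma Fml.subst_subst (σ τ : ℕ → Fml ℕ) (F : Fml ℕ) :
    (F.subst σ).subst τ = F.subst (fun b => (σ b).subst τ) := by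
  induction F <;> simp [Fml.subst, *]

/-- map a substitution over a sequent -/
def smap (τ : ℕ → Fml ℕ) (s : Seq ℕ) : Seq ℕ :=
  (s.1.map (Fml.subst τ), s.2.map (Fml.subst τ))

lemma LJRule.subst_map {τ : ℕ → Fml ℕ} {ps : List (Seq ℕ)} {c : Seq ℕ}
    (h : LJRule ps c) : LJRule (ps.map (smap τ)) (smap τ c) := by
  cases h with
  | id Γ A => simpa [smap, Fml.subst] using LJRule.id (Γ.map (Fml.subst τ)) (A.subst τ)
  | botL Γ Δ => simpa [smap, Fml.subst] using LJRule.botL (Γ.map (Fml.subst τ)) (Δ.map (Fml.subst τ))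
  | topR Γ => simpa [smap, Fml.subst] using LJRule.topR (Γ.map (Fml.subst τ))
  | wL A Γ Δ => simpa [smap, Fml.subst] using LJRule.wL (A.subst τ) (Γ.map (Fml.subst τ)) (Δ.map (Fml.subst τ))
  | wR A Γ => simpa [smap, Fml.subst] using LJRule.wR (A.subst τ) (Γ.map (Fml.subst τ))
  | cL A Γ Δ => simpa [smap, Fml.subst] using LJRule.cL (A.subst τ) (Γ.map (Fml.subst τ)) (Δ.map (Fml.subst τ))
  | cut A Γ Δ => simpa [smap, Fml.subst] using LJRule.cut (A.subst τ) (Γ.map (Fml.subst τ)) (Δ.map (Fml.subst τ))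
  | andL₁ A B Γ Δ => simpa [smap, Fml.subst] using LJRule.andL₁ (A.subst τ) (B.subst τ) (Γ.map (Fml.subst τ)) (Δ.map (Fml.subst τ))
  | andL₂ A B Γ Δ => simpa [smap, Fml.subst] using LJRule.andL₂ (A.subst τ) (B.subst τ) (Γ.map (Fml.subst τ)) (Δ.map (Fml.subst τ))
  | andR A B Γ => simpa [smap, Fml.subst] using LJRule.andR (A.subst τ) (B.subst τ) (Γ.map (Fml.subst τ))
  | orL A B Γ Δ => simpa [smap, Fml.subst] using LJRule.orL (A.subst τ) (B.subst τ) (Γ.map (Fml.subst τ)) (Δ.map (Fml.subst τ))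
  | orR₁ A B Γ => simpa [smap, Fml.subst] using LJRule.orR₁ (A.subst τ) (B.subst τ) (Γ.map (Fml.subst τ))
  | orR₂ A B Γ => simpa [smap, Fml.subst] using LJRule.orR₂ (A.subst τ) (B.subst τ) (Γ.map (Fml.subst τ))
  | impL A B Γ Δ => simpa [smap, Fml.subst] using LJRule.impL (A.subst τ) (B.subst τ) (Γ.map (Fml.subst τ)) (Δ.map (Fml.subst τ))
  | impR A B Γ => simpa [smap, Fml.subst] using LJRule.impR (A.subst τ) (B.subst τ) (Γ.map (Fml.subst τ))

lemma CKSys.subst_map {τ : ℕ → Fml ℕ} {ps : List (Seq ℕ)} {c : Seq ℕ}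
    (h : CKSys Ax ps c) : CKSys Ax (ps.map (smap τ)) (smap τ c) := by
  rcases h with h | h | h | h
  · exact Or.inl h.subst_map
  · rcases h with ⟨Γ, A⟩
    refine Or.inr (Or.inl ?_)
    have : (Γ.map Fml.box).map (Fml.subst τ) = (Γ.map (Fml.subst τ)).map Fml.box := by
      simp [Multiset.map_map, Function.comp_def, Fml.subst]
    simpa [smap, Fml.subst, this] using KBoxRule.mk (Γ.map (Fml.subst τ)) (A.subst τ)
  · rcases h with ⟨Γ, A, B⟩
    refine Or.inr (Or.inr (Or.inl ?_))
    have : (Γ.map Fml.box).map (Fml.subst τ) = (Γ.map (Fml.subst τ)).map Fml.box := by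
      simp [Multiset.map_map, Function.comp_def, Fml.subst]
    simpa [smap, Fml.subst, this] using KDiaRule.mk (Γ.map (Fml.subst τ)) (A.subst τ) (B.subst τ)
  · rcases h with ⟨rfl, A, σ, hA, rfl⟩
    refine Or.inr (Or.inr (Or.inr ⟨rfl, A, fun b => (σ b).subst τ, hA, ?_⟩))
    simp [smap, Fml.subst_subst]

lemma Derives.subst {τ : ℕ → Fml ℕ} {Γ : Multiset (Fml ℕ)} {E : Option (Fml ℕ)}
    (h : Derives (CKSys Ax) Γ E) :
    Derives (CKSys Ax) (Γ.map (Fml.subst τ)) (E.map (Fml.subst τ)) := by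
  induction h with
  | @step ps c hr hp ih =>
    refine Derives.step (c := smap τ c) (CKSys.subst_map hr) ?_
    intro q hq
    obtain ⟨p, hp', rfl⟩ := List.mem_map.1 hq
    exact ih p hp'

end VH2


section VH3

variable {Ax : Fml ℕ → Prop}

lemma evalI_subst (v : ℕ → Bool) (τ : ℕ → Fml ℕ) (F : Fml ℕ) :
    evalI v (F.subst τ) = evalI (fun a => evalI v (τ a)) F := by
  induction F <;> simp [Fml.subst, evalI, *]

lemma evalR_subst (v : ℕ → Bool) (τ : ℕ → Fml ℕ) (F : Fml ℕ) :
    evalR v (F.subst τ) = evalR (fun a => evalR v (τ a)) F := by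
  induction F <;> simp [Fml.subst, evalR, *]

/-- Uniform evaluation: `evB false = evalI`, `evB true = evalR`. -/
def evB : Bool → (ℕ → Bool) → Fml ℕ → Bool
  | false => evalI
  | true => evalR

@[simp] lemma evB_atom (tf v a) : evB tf v (Fml.atom a) = v a := by cases tf <;> rfl
@[simp] lemma evB_top (tf v) : evB tf v (Fml.top) = true := by cases tf <;> rfl
@[simp] lemma evB_bot (tf v) : evB tf v (Fml.bot) = false := by cases tf <;> rfl
@[simp] lemma evB_and (tf v) (A B : Fml ℕ) :
    evB tf v (Fml.and A B) = (evB tf v A && evB tf v B) := by cases tf <;> rfl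
@[simp] lemma evB_or (tf v) (A B : Fml ℕ) :
    evB tf v (Fml.or A B) = (evB tf v A || evB tf v B) := by cases tf <;> rfl
@[simp] lemma evB_imp (tf v) (A B : Fml ℕ) :
    evB tf v (Fml.imp A B) = (!evB tf v A || evB tf v B) := by cases tf <;> rfl
lemma evB_box (tf v) (A : Fml ℕ) :
    evB tf v (Fml.box A) = (if tf = true then evB tf v A else true) := by cases tf <;> rfl
lemma evB_dia (tf v) (A : Fml ℕ) :
    evB tf v (Fml.dia A) = (if tf = true then evB tf v A else false) := by cases tf <;> rfl

lemma evB_subst (tf : Bool) (v : ℕ → Bool) (τ : ℕ → Fml ℕ) (F : Fml ℕ) :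
    evB tf v (F.subst τ) = evB tf (fun a => evB tf v (τ a)) F := by
  cases tf
  · exact evalI_subst v τ F
  · exact evalR_subst v τ F

variable (Ax) (Θ : Multiset (Fml ℕ)) (tf : Bool)

/-- The (Aczel-style) slash relation relative to the context `Θ`. -/
def Sl : Fml ℕ → Prop
  | .atom a => Derives (CKSys Ax) Θ (some (.atom a))
  | .top => True
  | .bot => False
  | .and A B => Sl A ∧ Sl B
  | .or A B => Sl A ∨ Sl B
  | .imp A B => Derives (CKSys Ax) Θ (some (.imp A B)) ∧ (Sl A → Sl B)
  | .box A => Derives (CKSys Ax) Θ (some (.box A)) ∧ (tf = true → Sl A)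
  | .dia A => tf = true ∧ Derives (CKSys Ax) Θ (some (.dia A)) ∧ Sl A

/-- Slash for succedents. -/
def SlO : Option (Fml ℕ) → Prop
  | none => False
  | some F => Sl Ax Θ tf F

variable {Ax Θ tf}

/-- Slashed formulas are provable. -/
lemma sl_prov : ∀ {F : Fml ℕ}, Sl Ax Θ tf F → Derives (CKSys Ax) Θ (some F) := by
  intro F
  induction F with
  | atom a => exact fun h => h
  | top => exact fun _ => dtop
  | bot => exact fun h => h.elim
  | and A B ihA ihB => exact fun h => dandR (ihA h.1) (ihB h.2)
  | or A B ihA ihB => exact fun h => h.elim (fun h => dorR1 (ihA h)) (fun h => dorR2 (ihB h))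
  | imp A B ihA ihB => exact fun h => h.1
  | box A ih => exact fun h => h.1
  | dia A ih => exact fun h => h.2.1

/-- The valuation induced by the slash along a substitution. -/
noncomputable def slw (σ : ℕ → Fml ℕ) (a : ℕ) : Bool :=
  @decide (Sl Ax Θ tf (σ a)) (Classical.propDecidable _)

lemma slw_iff {σ : ℕ → Fml ℕ} {a : ℕ} : slw (Ax := Ax) (Θ := Θ) (tf := tf) σ a = true ↔ Sl Ax Θ tf (σ a) := by
  simp [slw]

end VH3


section VH4

variable {Ax : Fml ℕ → Prop} {Θ : Multiset (Fml ℕ)} {tf : Bool}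

/-- Basic formulas true under the slash valuation have slashed instances. -/
lemma basic_sl (hT2 : tf = true → ∀ F : Fml ℕ, Derives (CKSys Ax) 0 (some (.imp F (.dia F))))
    (σ : ℕ → Fml ℕ) : ∀ {B : Fml ℕ}, Basic B →
    evB tf (slw (Ax := Ax) (Θ := Θ) (tf := tf) σ) B = true → Sl Ax Θ tf (B.subst σ) := by
  intro B hB
  induction hB with
  | atom a => intro h; simp at h; exact (slw_iff).1 h
  | top => intro _; simp [Fml.subst, Sl]
  | bot => intro h; simp at h
  | and hA hB ihA ihB =>
    intro h; simp at h
    exact ⟨ihA h.1, ihB h.2⟩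
  | or hA hB ihA ihB =>
    intro h; simp at h
    rcases h with h | h
    · exact Or.inl (ihA h)
    · exact Or.inr (ihB h)
  | dia hA ih =>
    intro h
    rw [evB_dia] at h
    by_cases htf : tf = true
    · subst htf
      rw [if_pos rfl] at h
      have hsl := ih h
      exact ⟨rfl, dmp (dweak0 (hT2 rfl _) Θ) (sl_prov hsl), hsl⟩
    · rw [if_neg htf] at h
      exact absurd h (by simp)

/-- Slashed instances of basic formulas are true under the slash valuation. -/
lemma basic_ev (σ : ℕ → Fml ℕ) : ∀ {B : Fml ℕ}, Basic B →
    Sl Ax Θ tf (B.subst σ) → evB tf (slw (Ax := Ax) (Θ := Θ) (tf := tf) σ) B = true := by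
  intro B hB
  induction hB with
  | atom a => intro h; simpa using (slw_iff).2 h
  | top => intro _; simp
  | bot => intro h; exact h.elim
  | and hA hB ihA ihB => intro h; simp; exact ⟨ihA h.1, ihB h.2⟩
  | or hA hB ihA ihB =>
    intro h; simp
    rcases h with h | h
    · exact Or.inl (ihA h)
    · exact Or.inr (ihB h)
  | dia hA ih =>
    intro h
    obtain ⟨htf, _, hsl⟩ := h
    subst htf
    rw [evB_dia, if_pos rfl]
    exact ih hsl

/-- Slashed instances of almost positive formulas are true under the slash valuation. -/
lemma apos_ev (hT2 : tf = true → ∀ F : Fml ℕ, Derives (CKSys Ax) 0 (some (.imp F (.dia F))))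
    (σ : ℕ → Fml ℕ) : ∀ {A : Fml ℕ}, AlmostPos A →
    Sl Ax Θ tf (A.subst σ) → evB tf (slw (Ax := Ax) (Θ := Θ) (tf := tf) σ) A = true := by
  intro A hA
  induction hA with
  | basic hB => exact basic_ev σ hB
  | and hA hB ihA ihB => intro h; simp; exact ⟨ihA h.1, ihB h.2⟩
  | or hA hB ihA ihB =>
    intro h; simp
    rcases h with h | h
    · exact Or.inl (ihA h)
    · exact Or.inr (ihB h)
  | box hA ih =>
    intro h
    rw [evB_box]
    by_cases htf : tf = true
    · subst htf
      rw [if_pos rfl]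
      exact ih (h.2 rfl)
    · rw [if_neg htf]
  | dia hA ih =>
    intro h
    obtain ⟨htf, _, hsl⟩ := h
    subst htf
    rw [evB_dia, if_pos rfl]
    exact ih hsl
  | imp hA hB ihB =>
    intro h
    simp only [evB_imp]
    rcases hev : evB tf (slw (Ax := Ax) (Θ := Θ) (tf := tf) σ) _ with _ | _
    · simp
    · simp only [Bool.not_true, Bool.false_or]
      exact ihB (h.2 (basic_sl hT2 σ hA hev))

/-- Provable instances of constructive formulas true under the slash valuation are slashed. -/
lemma constr_sl (hT1 : tf = true → ∀ F : Fml ℕ, Derives (CKSys Ax) 0 (some (.imp (.box F) F)))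
    (hT2 : tf = true → ∀ F : Fml ℕ, Derives (CKSys Ax) 0 (some (.imp F (.dia F))))
    (σ : ℕ → Fml ℕ) : ∀ {B : Fml ℕ}, Constructive B →
    evB tf (slw (Ax := Ax) (Θ := Θ) (tf := tf) σ) B = true →
    Derives (CKSys Ax) Θ (some (B.subst σ)) → Sl Ax Θ tf (B.subst σ) := by
  intro B hB
  induction hB with
  | basic hB => intro hev _; exact basic_sl hT2 σ hB hev
  | and hA hB ihA ihB =>
    intro hev hp; simp at hev
    exact ⟨ihA hev.1 (dand1 hp), ihB hev.2 (dand2 hp)⟩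
  | box hA ih =>
    intro hev hp
    refine ⟨hp, fun htf => ?_⟩
    subst htf
    have hpA : Derives (CKSys Ax) Θ (some (Fml.subst σ _)) :=
      dmp (dweak0 (hT1 rfl _) Θ) hp
    rw [evB_box, if_pos rfl] at hev
    exact ih hev hpA
  | imp hA hB ihB =>
    intro hev hp
    refine ⟨hp, fun hsl => ?_⟩
    have hevA := apos_ev hT2 σ hA hsl
    simp only [evB_imp, hevA, Bool.not_true, Bool.false_or] at hev
    exact ihB hev (dmp hp (sl_prov hsl))

/-- Axiom instances are slashed. -/
lemma ax_sl (hval : ∀ Δ E, Derives (CKSys Ax) Δ E → SeqValid (evB tf) Δ E)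
    (hT1 : tf = true → ∀ F : Fml ℕ, Derives (CKSys Ax) 0 (some (.imp (.box F) F)))
    (hT2 : tf = true → ∀ F : Fml ℕ, Derives (CKSys Ax) 0 (some (.imp F (.dia F))))
    {A : Fml ℕ} (hA : Ax A) (hC : Constructive A) (σ : ℕ → Fml ℕ) :
    Sl Ax Θ tf (A.subst σ) := by
  classical
  set σt : ℕ → Fml ℕ := fun a => cond (slw (Ax := Ax) (Θ := Θ) (tf := tf) σ a) .top .bot with hσt
  have hax : Derives (CKSys Ax) 0 (some (A.subst σt)) :=
    dstep (Or.inr (Or.inr (Or.inr ⟨rfl, A, σt, hA, rfl⟩))) dnil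
  have hv := hval _ _ hax
  obtain ⟨B, hB, hBt⟩ := hv (fun _ => true) (by intro F hF; exact absurd hF (Multiset.notMem_zero F))
  rw [Option.mem_def, Option.some.injEq] at hB
  subst hB
  rw [evB_subst] at hBt
  have hfun : (fun a => evB tf (fun _ => true) (σt a)) = slw (Ax := Ax) (Θ := Θ) (tf := tf) σ := by
    funext a
    rcases h : slw (Ax := Ax) (Θ := Θ) (tf := tf) σ a with _ | _ <;> simp [hσt, h]
  rw [hfun] at hBt
  have hPA : Derives (CKSys Ax) Θ (some (A.subst σ)) :=
    dweak0 (dstep (Or.inr (Or.inr (Or.inr ⟨rfl, A, σ, hA, rfl⟩))) dnil) Θ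
  exact constr_sl hT1 hT2 σ hC hBt hPA

/-- Provable Harrop formulas are slashed. -/
lemma harrop_sl (hT1 : tf = true → ∀ F : Fml ℕ, Derives (CKSys Ax) 0 (some (.imp (.box F) F)))
    (hbot : ¬ Derives (CKSys Ax) Θ (some .bot)) :
    ∀ {F : Fml ℕ}, Harrop F → Derives (CKSys Ax) Θ (some F) → Sl Ax Θ tf F := by
  intro F hF
  induction hF with
  | atom a => exact fun h => h
  | top => intro _; trivial
  | bot => exact fun h => absurd h hbot
  | and hA hB ihA ihB => exact fun h => ⟨ihA (dand1 h), ihB (dand2 h)⟩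
  | box hA ih =>
    intro h
    exact ⟨h, fun htf => ih (dmp (dweak0 (hT1 htf _) Θ) h)⟩
  | imp A hB ih =>
    intro h
    exact ⟨h, fun hsl => ih (dmp h (sl_prov hsl))⟩

end VH4


section VH5

variable {Ax : Fml ℕ → Prop} {Θ : Multiset (Fml ℕ)} {tf : Bool}

/-- Main soundness lemma of the slash: every derivable sequent whose antecedent
is slashed has a slashed succedent. -/
lemma main_sl (hCS : ∀ A, Ax A → Constructive A)
    (hval : ∀ Δ E, Derives (CKSys Ax) Δ E → SeqValid (evB tf) Δ E)
    (hT1 : tf = true → ∀ F : Fml ℕ, Derives (CKSys Ax) 0 (some (.imp (.box F) F)))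
    (hT2 : tf = true → ∀ F : Fml ℕ, Derives (CKSys Ax) 0 (some (.imp F (.dia F))))
    {Δ : Multiset (Fml ℕ)} {E : Option (Fml ℕ)} (h : Derives (CKSys Ax) Δ E) :
    (∀ F ∈ Δ, Sl Ax Θ tf F) → SlO Ax Θ tf E := by
  induction h with
  | @step ps c hr hp ih =>
    intro hs
    have hd : Derives (CKSys Ax) c.1 c.2 := Derives.step hr hp
    rcases hr with hlj | hkb | hkd | hax
    · cases hlj with
      | id Γ A => exact hs A (Multiset.mem_cons_self A Γ)
      | botL Γ Δ => exact (hs _ (Multiset.mem_cons_self _ _)).elim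
      | topR Γ => trivial
      | wL A Γ Δ =>
        exact ih (Γ, Δ) (by simp) (fun F hF => hs F (Multiset.mem_cons_of_mem hF))
      | wR A Γ => exact (ih (Γ, none) (by simp) hs).elim
      | cL A Γ Δ =>
        refine ih (A ::ₘ A ::ₘ Γ, Δ) (by simp) ?_
        intro F hF
        rcases Multiset.mem_cons.1 hF with rfl | hF
        · exact hs _ (Multiset.mem_cons_self _ _)
        · rcases Multiset.mem_cons.1 hF with rfl | hF
          · exact hs _ (Multiset.mem_cons_self _ _)
          · exact hs _ (Multiset.mem_cons_of_mem hF)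
      | cut A Γ Δ =>
        have h1 : Sl Ax Θ tf A := ih (Γ, some A) (by simp) hs
        refine ih (A ::ₘ Γ, Δ) (by simp) ?_
        intro F hF
        rcases Multiset.mem_cons.1 hF with rfl | hF
        · exact h1
        · exact hs _ hF
      | andL₁ A B Γ Δ =>
        refine ih (A ::ₘ Γ, Δ) (by simp) ?_
        intro F hF
        rcases Multiset.mem_cons.1 hF with rfl | hF
        · exact (hs _ (Multiset.mem_cons_self _ _)).1
        · exact hs _ (Multiset.mem_cons_of_mem hF)
      | andL₂ A B Γ Δ =>
        refine ih (B ::ₘ Γ, Δ) (by simp) ?_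
        intro F hF
        rcases Multiset.mem_cons.1 hF with rfl | hF
        · exact (hs _ (Multiset.mem_cons_self _ _)).2
        · exact hs _ (Multiset.mem_cons_of_mem hF)
      | andR A B Γ =>
        exact ⟨ih (Γ, some A) (by simp) hs, ih (Γ, some B) (by simp) hs⟩
      | orL A B Γ Δ =>
        rcases hs _ (Multiset.mem_cons_self _ _) with hA | hB
        · refine ih (A ::ₘ Γ, Δ) (by simp) ?_
          intro F hF
          rcases Multiset.mem_cons.1 hF with rfl | hF
          · exact hA
          · exact hs _ (Multiset.mem_cons_of_mem hF)
        · refine ih (B ::ₘ Γ, Δ) (by simp) ?_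
          intro F hF
          rcases Multiset.mem_cons.1 hF with rfl | hF
          · exact hB
          · exact hs _ (Multiset.mem_cons_of_mem hF)
      | orR₁ A B Γ => exact Or.inl (ih (Γ, some A) (by simp) hs)
      | orR₂ A B Γ => exact Or.inr (ih (Γ, some B) (by simp) hs)
      | impL A B Γ Δ =>
        have himp := hs _ (Multiset.mem_cons_self _ _)
        have hs' : ∀ F ∈ Γ, Sl Ax Θ tf F := fun F hF => hs _ (Multiset.mem_cons_of_mem hF)
        have hA : Sl Ax Θ tf A := ih (Γ, some A) (by simp) hs'
        have hB : Sl Ax Θ tf B := himp.2 hA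
        refine ih (B ::ₘ Γ, Δ) (by simp) ?_
        intro F hF
        rcases Multiset.mem_cons.1 hF with rfl | hF
        · exact hB
        · exact hs' _ hF
      | impR A B Γ =>
        refine ⟨dmcut hd (fun F hF => sl_prov (hs F hF)), fun hA => ?_⟩
        refine ih (A ::ₘ Γ, some B) (by simp) ?_
        intro F hF
        rcases Multiset.mem_cons.1 hF with rfl | hF
        · exact hA
        · exact hs _ hF
    · rcases hkb with ⟨Γ, A⟩
      refine ⟨dmcut hd (fun F hF => sl_prov (hs F hF)), fun htf => ?_⟩
      refine ih (Γ, some A) (by simp) ?_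
      intro F hF
      exact (hs _ (Multiset.mem_map_of_mem Fml.box hF)).2 htf
    · rcases hkd with ⟨Γ, A, B⟩
      obtain ⟨htf, _, hA⟩ := hs _ (Multiset.mem_cons_self _ _)
      refine ⟨htf, dmcut hd (fun F hF => sl_prov (hs F hF)), ?_⟩
      refine ih (A ::ₘ Γ, some B) (by simp) ?_
      intro F hF
      rcases Multiset.mem_cons.1 hF with rfl | hF
      · exact hA
      · exact (hs _ (Multiset.mem_cons_of_mem (Multiset.mem_map_of_mem Fml.box hF))).2 htf
    · obtain ⟨rfl, A, σ, hA, rfl⟩ := hax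
      exact ax_sl hval hT1 hT2 hA (hCS A hA) σ

end VH5


/-- Let `𝒞` be a finite set of constructive formulas and let
`G = CK+𝒞` be either T-free or T-full.  Then `G` has the Visser–Harrop
property. -/
theorem statement_0 (CS : Finset (Fml ℕ)) (hCS : ∀ A ∈ CS, Constructive A)
    (hTF : TFree (· ∈ CS) ∨ TFull (· ∈ CS))
    (Γ : Multiset (Fml ℕ)) (hΓ : ∀ A ∈ Γ, Harrop A)
    (AB : List (Fml ℕ × Fml ℕ)) (C D : Fml ℕ)
    (h : Derives (CKSys (· ∈ CS)) (Γ + imps AB) (some (.or C D))) :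
    Derives (CKSys (· ∈ CS)) (Γ + imps AB) (some C) ∨
    Derives (CKSys (· ∈ CS)) (Γ + imps AB) (some D) ∨
    ∃ p ∈ AB, Derives (CKSys (· ∈ CS)) (Γ + imps AB) (some p.1) := by
  classical
  by_cases hexA : ∃ p ∈ AB, Derives (CKSys (· ∈ CS)) (Γ + imps AB) (some p.1)
  · exact Or.inr (Or.inr hexA)
  by_cases hbot : Derives (CKSys (· ∈ CS)) (Γ + imps AB) (some .bot)
  · exact Or.inl (dbotC hbot)
  push_neg at hexA
  obtain ⟨tf, hval, hT1, hT2⟩ :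
      ∃ tf : Bool, (∀ Δ E, Derives (CKSys (· ∈ CS)) Δ E → SeqValid (evB tf) Δ E) ∧
        (tf = true → ∀ F : Fml ℕ, Derives (CKSys (· ∈ CS)) 0 (some (.imp (.box F) F))) ∧
        (tf = true → ∀ F : Fml ℕ, Derives (CKSys (· ∈ CS)) 0 (some (.imp F (.dia F)))) := by
    rcases hTF with hfree | hfull
    · exact ⟨false, hfree, fun h => absurd h (by simp), fun h => absurd h (by simp)⟩
    · refine ⟨true, hfull.1, fun _ F => ?_, fun _ F => ?_⟩
      · have h0 := Derives.subst (τ := fun _ => F) (hfull.2.1 0)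
        simpa [Fml.subst] using h0
      · have h0 := Derives.subst (τ := fun _ => F) (hfull.2.2 0)
        simpa [Fml.subst] using h0
  have hsl : ∀ F ∈ Γ + imps AB, Sl (· ∈ CS) (Γ + imps AB) tf F := by
    intro F hF
    rcases Multiset.mem_add.1 hF with h1 | h2
    · exact harrop_sl hT1 hbot (hΓ F h1) (dmem hF)
    · have h2' : F ∈ AB.map fun p => Fml.imp p.1 p.2 := h2
      obtain ⟨p, hp, rfl⟩ := List.mem_map.1 h2'
      exact ⟨dmem hF, fun hsl => absurd (sl_prov hsl) (hexA p hp)⟩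
  have hmain := main_sl hCS hval hT1 hT2 h hsl
  simp only [SlO, Sl] at hmain
  rcases hmain with hC | hD
  · exact Or.inl (sl_prov hC)
  · exact Or.inr (Or.inl (sl_prov hD))

end UPT
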